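/- arXiv:2209.04329 — 5 statements merged into one kernel-verified Lean document; each statement's English description precedes it below -/
import Mathlib

section
/- Let μ and ν be probability measures on ℝ, let p ∈ (0,1] and suppose p·ν ≤ μ (as measures, i.e. p·ν(A) ≤ μ(A) for every Borel set A). Let q ∈ ℝ satisfy μ([q, ∞)) = p, and suppose the identity function is integrable with respect to both μ and ν. Then ∫ y dν(y) ≤ (1/p) ∫_{[q,∞)} y dμ(y). That is, the mean of the component ν of the mixture μ is at most the mean of μ trimmed to its upper p-fraction. -/
open MeasureTheory

/-- Measure-theoretic core of the upper Lee bound: if `p·ν ≤ μ` and `q` is such that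
`μ([q,∞)) = p`, the mean of the mixture component `ν` is at most the mean of `μ`
trimmed to its upper `p`-fraction. -/
theorem component_mean_le_upper_trimmed_mean (μ ν : Measure ℝ)
    [IsProbabilityMeasure μ] [IsProbabilityMeasure ν]
    (p : ℝ) (hp : p ∈ Set.Ioc (0 : ℝ) 1)
    (hdom : (ENNReal.ofReal p) • ν ≤ μ)
    (q : ℝ) (hq : μ (Set.Ici q) = ENNReal.ofReal p)
    (hμi : Integrable (fun y : ℝ => y) μ) (hνi : Integrable (fun y : ℝ => y) ν) :
    (∫ y, y ∂ν) ≤ (1 / p) * ∫ y in Set.Ici q, y ∂μ := by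
  obtain ⟨hp0, hp1⟩ := hp
  have hA : MeasurableSet (Set.Ici q) := measurableSet_Ici
  have hνint : Integrable (fun x => x - q) (ν.restrict (Set.Ici q)) :=
    hνi.restrict.sub (integrable_const q)
  have hμint : Integrable (fun x => x - q) (μ.restrict (Set.Ici q)) :=
    hμi.restrict.sub (integrable_const q)
  have hνnn : 0 ≤ᵐ[ν.restrict (Set.Ici q)] fun x => x - q :=
    (ae_restrict_iff' hA).2 (ae_of_all _ fun x hx => sub_nonneg.2 hx)
  have hμnn : 0 ≤ᵐ[μ.restrict (Set.Ici q)] fun x => x - q :=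
    (ae_restrict_iff' hA).2 (ae_of_all _ fun x hx => sub_nonneg.2 hx)
  have e1 : ENNReal.ofReal (∫ x in Set.Ici q, (x - q) ∂ν)
      = ∫⁻ x in Set.Ici q, ENNReal.ofReal (x - q) ∂ν :=
    ofReal_integral_eq_lintegral_ofReal hνint hνnn
  have e2 : ENNReal.ofReal (∫ x in Set.Ici q, (x - q) ∂μ)
      = ∫⁻ x in Set.Ici q, ENNReal.ofReal (x - q) ∂μ :=
    ofReal_integral_eq_lintegral_ofReal hμint hμnn
  have hle : ENNReal.ofReal p * ∫⁻ x in Set.Ici q, ENNReal.ofReal (x - q) ∂ν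
      ≤ ∫⁻ x in Set.Ici q, ENNReal.ofReal (x - q) ∂μ := by
    rw [← smul_eq_mul, ← lintegral_smul_measure, ← Measure.restrict_smul]
    exact lintegral_mono' (Measure.restrict_mono subset_rfl hdom) le_rfl
  have key1' : ENNReal.ofReal (p * ∫ x in Set.Ici q, (x - q) ∂ν)
      ≤ ENNReal.ofReal (∫ x in Set.Ici q, (x - q) ∂μ) := by
    rw [ENNReal.ofReal_mul hp0.le, e1, e2]; exact hle
  have hμInn : 0 ≤ ∫ x in Set.Ici q, (x - q) ∂μ := integral_nonneg_of_ae hμnn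
  have key1 : p * ∫ x in Set.Ici q, (x - q) ∂ν ≤ ∫ x in Set.Ici q, (x - q) ∂μ :=
    (ENNReal.ofReal_le_ofReal_iff hμInn).1 key1'
  have expν : ∫ x in Set.Ici q, (x - q) ∂ν
      = (∫ x in Set.Ici q, x ∂ν) - q * (ν (Set.Ici q)).toReal := by
    rw [integral_sub hνi.restrict (integrable_const q), setIntegral_const, smul_eq_mul, mul_comm]; rfl
  have expμ : ∫ x in Set.Ici q, (x - q) ∂μ
      = (∫ x in Set.Ici q, x ∂μ) - q * p := by
    rw [integral_sub hμi.restrict (integrable_const q), setIntegral_const, Measure.real, hq,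
      ENNReal.toReal_ofReal hp0.le, smul_eq_mul, mul_comm]
  have key2 : ∫ x in (Set.Ici q)ᶜ, x ∂ν ≤ q * (ν (Set.Ici q)ᶜ).toReal := by
    have h : ∫ x in (Set.Ici q)ᶜ, x ∂ν ≤ ∫ x in (Set.Ici q)ᶜ, q ∂ν := by
      refine setIntegral_mono_on hνi.restrict (integrable_const q) hA.compl ?_
      intro x hx
      simp only [Set.mem_compl_iff, Set.mem_Ici, not_le] at hx
      exact hx.le
    simpa [setIntegral_const, mul_comm, Measure.real] using h
  have hsum : (ν (Set.Ici q)).toReal + (ν (Set.Ici q)ᶜ).toReal = 1 := by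
    rw [← ENNReal.toReal_add (measure_ne_top _ _) (measure_ne_top _ _),
      measure_add_measure_compl hA, measure_univ, ENNReal.toReal_one]
  have hsplit : (∫ x in Set.Ici q, x ∂ν) + ∫ x in (Set.Ici q)ᶜ, x ∂ν = ∫ x, x ∂ν :=
    integral_add_compl hA hνi
  have hmain : p * ∫ y, y ∂ν ≤ ∫ y in Set.Ici q, y ∂μ := by
    have h2 : p * ∫ x in (Set.Ici q)ᶜ, x ∂ν ≤ p * (q * (ν (Set.Ici q)ᶜ).toReal) :=
      mul_le_mul_of_nonneg_left key2 hp0.le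
    rw [expν, expμ] at key1
    calc p * ∫ y, y ∂ν
        = p * ∫ x in Set.Ici q, x ∂ν + p * ∫ x in (Set.Ici q)ᶜ, x ∂ν := by
          rw [← hsplit]; ring
      _ ≤ p * ∫ x in Set.Ici q, x ∂ν + p * (q * (ν (Set.Ici q)ᶜ).toReal) := by linarith
      _ = p * ((∫ x in Set.Ici q, x ∂ν) - q * (ν (Set.Ici q)).toReal)
            + p * q * ((ν (Set.Ici q)).toReal + (ν (Set.Ici q)ᶜ).toReal) := by ring
      _ = p * ((∫ x in Set.Ici q, x ∂ν) - q * (ν (Set.Ici q)).toReal) + p * q := by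
          rw [hsum]; ring
      _ ≤ ((∫ x in Set.Ici q, x ∂μ) - q * p) + p * q := by linarith
      _ = ∫ y in Set.Ici q, y ∂μ := by ring
  rw [one_div, inv_mul_eq_div, le_div_iff₀ hp0, mul_comm]
  exact hmain
end

section
/- Let μ and ν be probability measures on ℝ, let p ∈ (0,1] and suppose p·ν ≤ μ (as measures, i.e. p·ν(A) ≤ μ(A) for every Borel set A). Let q ∈ ℝ satisfy μ((−∞, q]) = p, and suppose the identity function is integrable with respect to both μ and ν. Then ∫ y dν(y) ≥ (1/p) ∫_{(−∞,q]} y dμ(y). That is, the mean of the component ν of the mixture μ is at least the mean of μ trimmed to its lower p-fraction. -/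
open MeasureTheory

/-- Measure-theoretic core of the lower Lee bound: if `p·ν ≤ μ` and `q` is such that
`μ((-∞,q]) = p`, the mean of the mixture component `ν` is at least the mean of `μ`
trimmed to its lower `p`-fraction. -/
theorem component_mean_ge_lower_trimmed_mean (μ ν : Measure ℝ)
    [IsProbabilityMeasure μ] [IsProbabilityMeasure ν]
    (p : ℝ) (hp : p ∈ Set.Ioc (0 : ℝ) 1)
    (hdom : (ENNReal.ofReal p) • ν ≤ μ)
    (q : ℝ) (hq : μ (Set.Iic q) = ENNReal.ofReal p)
    (hμi : Integrable (fun y : ℝ => y) μ) (hνi : Integrable (fun y : ℝ => y) ν) :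
    (1 / p) * (∫ y in Set.Iic q, y ∂μ) ≤ ∫ y, y ∂ν := by
  obtain ⟨hp0, hp1⟩ := hp
  have hc : (ENNReal.ofReal p).toReal = p := ENNReal.toReal_ofReal hp0.le
  have hms : MeasurableSet (Set.Iic q) := measurableSet_Iic
  have hνg : Integrable (fun y : ℝ => y - q) ν := hνi.sub (integrable_const q)
  have hμgr : Integrable (fun y : ℝ => q - y) (μ.restrict (Set.Iic q)) :=
    (integrable_const q).sub hμi.restrict
  -- domination of restricted measures
  have hres : ((ENNReal.ofReal p) • ν).restrict (Set.Iic q) ≤ μ.restrict (Set.Iic q) :=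
    Measure.restrict_mono subset_rfl hdom
  -- key comparison on (-∞, q]
  have hnn : 0 ≤ᵐ[μ.restrict (Set.Iic q)] fun y : ℝ => q - y :=
    (ae_restrict_iff' hms).mpr (ae_of_all _ fun y hy => sub_nonneg.mpr hy)
  have h1 : ∫ y in Set.Iic q, (q - y) ∂((ENNReal.ofReal p) • ν)
      ≤ ∫ y in Set.Iic q, (q - y) ∂μ :=
    integral_mono_measure hres hnn hμgr
  have h2 : ∫ y in Set.Iic q, (q - y) ∂((ENNReal.ofReal p) • ν)
      = p * ∫ y in Set.Iic q, (q - y) ∂ν := by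
    rw [Measure.restrict_smul, integral_smul_measure, hc, smul_eq_mul]
  -- evaluate both sides in terms of ∫ y
  have hB : ∫ y in Set.Iic q, (q - y) ∂ν
      = q * (ν (Set.Iic q)).toReal - ∫ y in Set.Iic q, y ∂ν := by
    rw [integral_sub (integrable_const q) hνi.restrict, setIntegral_const, smul_eq_mul, measureReal_def]; ring
  have hA : ∫ y in Set.Iic q, (q - y) ∂μ
      = q * p - ∫ y in Set.Iic q, y ∂μ := by
    rw [integral_sub (integrable_const q) hμi.restrict, setIntegral_const, smul_eq_mul, measureReal_def,
      hq, hc]; ring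
  -- extend to the whole line: ∫ (y-q) dν ≥ ∫_{Iic q} (y-q) dν
  have hsplit : ∫ y in Set.Iic q, (y - q) ∂ν + ∫ y in (Set.Iic q)ᶜ, (y - q) ∂ν
      = ∫ y, (y - q) ∂ν := integral_add_compl hms hνg
  have hcompl : 0 ≤ ∫ y in (Set.Iic q)ᶜ, (y - q) ∂ν := by
    refine setIntegral_nonneg hms.compl fun y hy => ?_
    have : q < y := by simpa [Set.mem_Iic] using hy
    linarith
  have htot : ∫ y, (y - q) ∂ν = ∫ y, y ∂ν - q := by
    rw [integral_sub hνi (integrable_const q), integral_const]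
    simp
  have hneg : ∫ y in Set.Iic q, (y - q) ∂ν
      = -∫ y in Set.Iic q, (q - y) ∂ν := by
    rw [← integral_neg]; congr 1; ext y; ring
  -- combine
  have hIic : ∫ y in Set.Iic q, y ∂μ ≤ p * ∫ y, y ∂ν := by
    have h3 : q * p - ∫ y in Set.Iic q, y ∂μ
        ≥ p * (q * (ν (Set.Iic q)).toReal - ∫ y in Set.Iic q, y ∂ν) := by
      calc p * (q * (ν (Set.Iic q)).toReal - ∫ y in Set.Iic q, y ∂ν)
          = ∫ y in Set.Iic q, (q - y) ∂((ENNReal.ofReal p) • ν) := by rw [h2, hB]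
        _ ≤ ∫ y in Set.Iic q, (q - y) ∂μ := h1
        _ = q * p - ∫ y in Set.Iic q, y ∂μ := hA
    have h4 : ∫ y in Set.Iic q, (y - q) ∂ν ≤ ∫ y, y ∂ν - q := by
      have := hcompl
      linarith [hsplit, htot]
    have h5 : (∫ y in Set.Iic q, y ∂ν) - q * (ν (Set.Iic q)).toReal
        ≤ ∫ y, y ∂ν - q := by
      have : ∫ y in Set.Iic q, (y - q) ∂ν
          = (∫ y in Set.Iic q, y ∂ν) - q * (ν (Set.Iic q)).toReal := by
        rw [hneg, hB]; ring
      linarith [h4]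
    nlinarith [h3, h5]
  rw [one_div, inv_mul_le_iff₀ hp0]
  linarith [hIic]
end

section
/- In the sample selection setup with strong monotonicity, let q ∈ ℝ satisfy P(Y ≤ q | D=1, S=1) = 1 − p₀ and P(Y = q | D=1, S=1) = 0. Then the always-taker average treatment effect satisfies E[Y₁ − Y₀ | S₁ = 1, S₀ = 1] ≤ E[Y | D=1, S=1, Y ≥ q] − E[Y | D=0, S=1]. -/
open MeasureTheory ProbabilityTheory

/-- Conditional mean `E[X | A] = (∫_A X dP) / P(A)`. -/
noncomputable def condMean {Ω : Type*} [MeasurableSpace Ω] (P : Measure Ω)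
    (A : Set Ω) (X : Ω → ℝ) : ℝ :=
  (∫ ω in A, X ω ∂P) / (P A).toReal

section helpers
variable {Ω : Type*} [MeasurableSpace Ω]

lemma factor_measure (P : Measure Ω) (d : Ω → Bool)
    {α : Type*} [MeasurableSpace α] (Z : Ω → α) (hindep : IndepFun d Z P)
    (b : Bool) (E : Set α) (hE : MeasurableSet E) :
    P ({ω | d ω = b} ∩ Z ⁻¹' E) = P {ω | d ω = b} * P (Z ⁻¹' E) := by
  have h := hindep.measure_inter_preimage_eq_mul {b} E (measurableSet_singleton b) hE
  exact h

lemma factor_integral (P : Measure Ω) [IsProbabilityMeasure P] (d : Ω → Bool)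
    (hdm : Measurable d)
    {α : Type*} [MeasurableSpace α] (Z : Ω → α) (hZm : Measurable Z)
    (hindep : IndepFun d Z P)
    (b : Bool) (E : Set α) (hE : MeasurableSet E) (f : α → ℝ) (hf : Measurable f) :
    ∫ ω in {ω | d ω = b} ∩ Z ⁻¹' E, f (Z ω) ∂P
      = (P {ω | d ω = b}).toReal * ∫ ω in Z ⁻¹' E, f (Z ω) ∂P := by
  have hg : Measurable (fun b' : Bool => if b' = b then (1:ℝ) else 0) := measurable_from_top
  have hh : Measurable (E.indicator f) := hf.indicator hE
  have hDb : MeasurableSet {ω | d ω = b} := hdm (measurableSet_singleton b)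
  have hZE : MeasurableSet (Z ⁻¹' E) := hZm hE
  have hi := (hindep.comp hg hh).integral_mul_eq_mul_integral
    ((hg.comp hdm).aestronglyMeasurable) ((hh.comp hZm).aestronglyMeasurable)
  have e1 : ((fun ω => if d ω = b then (1:ℝ) else 0) * fun ω => E.indicator f (Z ω))
      = Set.indicator ({ω | d ω = b} ∩ Z ⁻¹' E) (fun ω => f (Z ω)) := by
    funext ω
    by_cases h1 : d ω = b <;> by_cases h2 : Z ω ∈ E <;>
      simp [Set.indicator_apply, h1, h2, Set.mem_preimage]
  have e2 : (fun ω => if d ω = b then (1:ℝ) else 0)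
      = Set.indicator {ω | d ω = b} (fun _ => (1:ℝ)) := by
    funext ω; by_cases h1 : d ω = b <;> simp [Set.indicator_apply, h1]
  have e3 : (fun ω => E.indicator f (Z ω))
      = Set.indicator (Z ⁻¹' E) (fun ω => f (Z ω)) := by
    funext ω; by_cases h2 : Z ω ∈ E <;> simp [Set.indicator_apply, h2, Set.mem_preimage]
  calc ∫ ω in {ω | d ω = b} ∩ Z ⁻¹' E, f (Z ω) ∂P
      = ∫ ω, Set.indicator ({ω | d ω = b} ∩ Z ⁻¹' E) (fun ω => f (Z ω)) ω ∂P :=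
        (integral_indicator (hDb.inter hZE)).symm
    _ = ∫ ω, ((fun ω => if d ω = b then (1:ℝ) else 0) * fun ω => E.indicator f (Z ω)) ω ∂P := by
        rw [e1]
    _ = (∫ ω, (if d ω = b then (1:ℝ) else 0) ∂P) * ∫ ω, E.indicator f (Z ω) ∂P := hi
    _ = (P {ω | d ω = b}).toReal * ∫ ω in Z ⁻¹' E, f (Z ω) ∂P := by
        congr 1
        · rw [show (fun ω => if d ω = b then (1:ℝ) else 0) = _ from e2]
          simp [integral_indicator_const, hDb, measureReal_def]
        · rw [show (fun ω => E.indicator f (Z ω)) = _ from e3, integral_indicator hZE]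

end helpers

/-- Upper Lee bound under strong monotonicity: if `q` is the `(1 - p₀)`-quantile of the
observed outcome distribution of the selected treated (with no atom at `q`), then the
always-taker average treatment effect is at most the mean of the selected treated
outcomes trimmed from below at `q`, minus the mean outcome of the selected controls. -/
theorem lee_upper_bound {Ω : Type*} [MeasurableSpace Ω] (P : Measure Ω)
    [IsProbabilityMeasure P]
    (Y1 Y0 : Ω → ℝ) (s1 s0 d : Ω → Bool)
    (hY1m : Measurable Y1) (hY0m : Measurable Y0)
    (hs1m : Measurable s1) (hs0m : Measurable s0) (hdm : Measurable d)
    (hY1i : Integrable Y1 P) (hY0i : Integrable Y0 P)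
    (hindep : IndepFun d (fun ω => (Y1 ω, Y0 ω, s1 ω, s0 ω)) P)
    (hD0 : 0 < P {ω | d ω = true}) (hD1 : P {ω | d ω = true} < 1)
    (hS1 : 0 < P {ω | s1 ω = true}) (hS0 : 0 < P {ω | s0 ω = true})
    (hmono : ∀ᵐ ω ∂P, s0 ω = true → s1 ω = true)
    (p0 : ℝ) (hp0 : p0 = (P {ω | s0 ω = true}).toReal / (P {ω | s1 ω = true}).toReal)
    (S : Ω → Bool) (hS : S = fun ω => if d ω then s1 ω else s0 ω)
    (Y : Ω → ℝ) (hY : Y = fun ω => if d ω then Y1 ω else Y0 ω)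
    (q : ℝ)
    (hq1 : (P {ω | d ω = true ∧ S ω = true ∧ Y ω ≤ q}).toReal
        / (P {ω | d ω = true ∧ S ω = true}).toReal = 1 - p0)
    (hq2 : P {ω | d ω = true ∧ S ω = true ∧ Y ω = q} = 0) :
    condMean P {ω | s1 ω = true ∧ s0 ω = true} (fun ω => Y1 ω - Y0 ω)
      ≤ condMean P {ω | d ω = true ∧ S ω = true ∧ q ≤ Y ω} Y
        - condMean P {ω | d ω = false ∧ S ω = true} Y := by
  subst hS hY hp0
  have hZm : Measurable (fun ω => (Y1 ω, Y0 ω, s1 ω, s0 ω)) :=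
    hY1m.prodMk (hY0m.prodMk (hs1m.prodMk hs0m))
  -- measurable sets in Ω
  have hBm : MeasurableSet {ω | s0 ω = true} := hs0m (measurableSet_singleton true)
  have hCm : MeasurableSet {ω | s1 ω = true} := hs1m (measurableSet_singleton true)
  have hTm : MeasurableSet {ω | s1 ω = true ∧ q ≤ Y1 ω} :=
    hCm.inter (measurableSet_le measurable_const hY1m)
  have hDtm : MeasurableSet {ω | d ω = true} := hdm (measurableSet_singleton true)
  have hDfm : MeasurableSet {ω | d ω = false} := hdm (measurableSet_singleton false)
  -- measurable events
  have hECm : MeasurableSet {p : ℝ×ℝ×Bool×Bool | p.2.2.1 = true} :=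
    measurable_snd.snd.fst (measurableSet_singleton true)
  have hEBm : MeasurableSet {p : ℝ×ℝ×Bool×Bool | p.2.2.2 = true} :=
    measurable_snd.snd.snd (measurableSet_singleton true)
  have hETm : MeasurableSet {p : ℝ×ℝ×Bool×Bool | p.2.2.1 = true ∧ q ≤ p.1} :=
    hECm.inter (measurableSet_le measurable_const measurable_fst)
  have hELem : MeasurableSet {p : ℝ×ℝ×Bool×Bool | p.2.2.1 = true ∧ p.1 ≤ q} :=
    hECm.inter (measurableSet_le measurable_fst measurable_const)
  have hEEqm : MeasurableSet {p : ℝ×ℝ×Bool×Bool | p.2.2.1 = true ∧ p.1 = q} :=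
    hECm.inter (measurable_fst (measurableSet_singleton q))
  have hPfin : ∀ s : Set Ω, P s ≠ ⊤ := fun s => measure_ne_top P s
  -- positivity of the basic real quantities
  have hd1pos : 0 < (P {ω | d ω = true}).toReal :=
    ENNReal.toReal_pos (ne_of_gt hD0) (hPfin _)
  have hDfc : {ω | d ω = false} = {ω | d ω = true}ᶜ := by
    ext ω; cases hd : d ω <;> simp [hd]
  have hd0pos : 0 < (P {ω | d ω = false}).toReal := by
    rw [hDfc, measure_compl hDtm (hPfin _), measure_univ]
    exact ENNReal.toReal_pos (ne_of_gt (tsub_pos_iff_lt.2 hD1))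
      ((tsub_le_self.trans_lt ENNReal.one_lt_top).ne)
  have hmBpos : 0 < (P {ω | s0 ω = true}).toReal :=
    ENNReal.toReal_pos (ne_of_gt hS0) (hPfin _)
  have hmCpos : 0 < (P {ω | s1 ω = true}).toReal :=
    ENNReal.toReal_pos (ne_of_gt hS1) (hPfin _)
  -- monotonicity consequences
  have hBC : P ({ω | s0 ω = true} \ {ω | s1 ω = true}) = 0 := by
    have h := ae_iff.mp hmono
    refine measure_mono_null (fun ω hω => ?_) h
    simp only [Set.mem_setOf_eq, Set.mem_diff] at hω ⊢
    intro himp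
    exact hω.2 (himp hω.1)
  have hAae : ({ω | s1 ω = true ∧ s0 ω = true} : Set Ω) =ᵐ[P] {ω | s0 ω = true} := by
    rw [MeasureTheory.ae_eq_set]
    constructor
    · have he : {ω | s1 ω = true ∧ s0 ω = true} \ {ω | s0 ω = true} = (∅ : Set Ω) :=
        Set.diff_eq_empty.mpr fun ω hω => hω.2
      rw [he]; exact measure_empty
    · refine measure_mono_null (fun ω hω => ?_) hBC
      have h2 : ¬ (s1 ω = true) := fun h1 => hω.2 ⟨h1, hω.1⟩
      exact ⟨hω.1, h2⟩
  have hPA : P {ω | s1 ω = true ∧ s0 ω = true} = P {ω | s0 ω = true} := measure_congr hAae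
  -- beta reduce
  simp only [] at hq1 hq2
  -- set identities relating observed events to potential events
  have eLe : {ω | d ω = true ∧ (if d ω = true then s1 ω else s0 ω) = true
        ∧ (if d ω = true then Y1 ω else Y0 ω) ≤ q}
      = {ω | d ω = true} ∩ (fun ω => (Y1 ω, Y0 ω, s1 ω, s0 ω)) ⁻¹'
          {p : ℝ×ℝ×Bool×Bool | p.2.2.1 = true ∧ p.1 ≤ q} := by
    ext ω; cases hd : d ω <;> simp [hd]
  have eEq : {ω | d ω = true ∧ (if d ω = true then s1 ω else s0 ω) = true
        ∧ (if d ω = true then Y1 ω else Y0 ω) = q}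
      = {ω | d ω = true} ∩ (fun ω => (Y1 ω, Y0 ω, s1 ω, s0 ω)) ⁻¹'
          {p : ℝ×ℝ×Bool×Bool | p.2.2.1 = true ∧ p.1 = q} := by
    ext ω; cases hd : d ω <;> simp [hd]
  have eDS : {ω | d ω = true ∧ (if d ω = true then s1 ω else s0 ω) = true}
      = {ω | d ω = true} ∩ (fun ω => (Y1 ω, Y0 ω, s1 ω, s0 ω)) ⁻¹'
          {p : ℝ×ℝ×Bool×Bool | p.2.2.1 = true} := by
    ext ω; cases hd : d ω <;> simp [hd]
  have eT : {ω | d ω = true ∧ (if d ω = true then s1 ω else s0 ω) = true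
        ∧ q ≤ (if d ω = true then Y1 ω else Y0 ω)}
      = {ω | d ω = true} ∩ (fun ω => (Y1 ω, Y0 ω, s1 ω, s0 ω)) ⁻¹'
          {p : ℝ×ℝ×Bool×Bool | p.2.2.1 = true ∧ q ≤ p.1} := by
    ext ω; cases hd : d ω <;> simp [hd]
  have eDf : {ω | d ω = false ∧ (if d ω = true then s1 ω else s0 ω) = true}
      = {ω | d ω = false} ∩ (fun ω => (Y1 ω, Y0 ω, s1 ω, s0 ω)) ⁻¹'
          {p : ℝ×ℝ×Bool×Bool | p.2.2.2 = true} := by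
    ext ω; cases hd : d ω <;> simp [hd]
  -- preimages computed
  have hpreC : ((fun ω => (Y1 ω, Y0 ω, s1 ω, s0 ω)) ⁻¹'
      {p : ℝ×ℝ×Bool×Bool | p.2.2.1 = true}) = {ω | s1 ω = true} := rfl
  have hpreB : ((fun ω => (Y1 ω, Y0 ω, s1 ω, s0 ω)) ⁻¹'
      {p : ℝ×ℝ×Bool×Bool | p.2.2.2 = true}) = {ω | s0 ω = true} := rfl
  have hpreT : ((fun ω => (Y1 ω, Y0 ω, s1 ω, s0 ω)) ⁻¹'
      {p : ℝ×ℝ×Bool×Bool | p.2.2.1 = true ∧ q ≤ p.1}) = {ω | s1 ω = true ∧ q ≤ Y1 ω} := rfl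
  have hpreLe : ((fun ω => (Y1 ω, Y0 ω, s1 ω, s0 ω)) ⁻¹'
      {p : ℝ×ℝ×Bool×Bool | p.2.2.1 = true ∧ p.1 ≤ q}) = {ω | s1 ω = true ∧ Y1 ω ≤ q} := rfl
  have hpreEq : ((fun ω => (Y1 ω, Y0 ω, s1 ω, s0 ω)) ⁻¹'
      {p : ℝ×ℝ×Bool×Bool | p.2.2.1 = true ∧ p.1 = q}) = {ω | s1 ω = true ∧ Y1 ω = q} := rfl
  -- process hq1
  rw [eLe, eDS, factor_measure P d _ hindep true _ hELem,
      factor_measure P d _ hindep true _ hECm, hpreLe, hpreC,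
      ENNReal.toReal_mul, ENNReal.toReal_mul,
      mul_div_mul_left _ _ (ne_of_gt hd1pos)] at hq1
  have hLe : (P {ω | s1 ω = true ∧ Y1 ω ≤ q}).toReal
      = (P {ω | s1 ω = true}).toReal - (P {ω | s0 ω = true}).toReal := by
    have hc : (P {ω | s1 ω = true}).toReal ≠ 0 := ne_of_gt hmCpos
    field_simp at hq1
    linarith
  -- process hq2
  rw [eEq, factor_measure P d _ hindep true _ hEEqm, hpreEq] at hq2
  have hAtom : P {ω | s1 ω = true ∧ Y1 ω = q} = 0 := by
    rcases mul_eq_zero.mp hq2 with h | h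
    · exact absurd h (ne_of_gt hD0)
    · exact h
  -- P(T) = P(B)
  have hUm : MeasurableSet {ω | s1 ω = true ∧ q < Y1 ω} :=
    hCm.inter (measurableSet_lt measurable_const hY1m)
  have hsplitC : P {ω | s1 ω = true ∧ Y1 ω ≤ q} + P {ω | s1 ω = true ∧ q < Y1 ω}
      = P {ω | s1 ω = true} := by
    rw [← measure_union (Set.disjoint_left.mpr fun ω h1 h2 =>
      absurd h2.2 (not_lt.mpr h1.2)) hUm]
    congr 1
    ext ω
    simp only [Set.mem_union, Set.mem_setOf_eq]
    constructor
    · rintro (⟨h1, _⟩ | ⟨h1, _⟩) <;> exact h1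
    · intro h1
      rcases le_or_gt (Y1 ω) q with h | h
      · exact Or.inl ⟨h1, h⟩
      · exact Or.inr ⟨h1, h⟩
  have hPTU : P {ω | s1 ω = true ∧ q ≤ Y1 ω} = P {ω | s1 ω = true ∧ q < Y1 ω} := by
    refine le_antisymm ?_ (measure_mono fun ω h => ⟨h.1, le_of_lt h.2⟩)
    calc P {ω | s1 ω = true ∧ q ≤ Y1 ω}
        ≤ P ({ω | s1 ω = true ∧ q < Y1 ω} ∪ {ω | s1 ω = true ∧ Y1 ω = q}) := by
          refine measure_mono fun ω h => ?_
          rcases lt_or_eq_of_le h.2 with h' | h'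
          · exact Or.inl ⟨h.1, h'⟩
          · exact Or.inr ⟨h.1, h'.symm⟩
      _ ≤ P {ω | s1 ω = true ∧ q < Y1 ω} + P {ω | s1 ω = true ∧ Y1 ω = q} :=
          measure_union_le _ _
      _ = P {ω | s1 ω = true ∧ q < Y1 ω} := by rw [hAtom, add_zero]
  have hmT : (P {ω | s1 ω = true ∧ q ≤ Y1 ω}).toReal = (P {ω | s0 ω = true}).toReal := by
    have h := congrArg ENNReal.toReal hsplitC
    rw [ENNReal.toReal_add (hPfin _) (hPfin _)] at h
    rw [hPTU]
    linarith
  -- trimming inequality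
  have hdisjB : Disjoint ({ω | s0 ω = true} ∩ {ω | s1 ω = true ∧ q ≤ Y1 ω})
      ({ω | s0 ω = true} \ {ω | s1 ω = true ∧ q ≤ Y1 ω}) :=
    Set.disjoint_left.mpr fun ω h1 h2 => h2.2 h1.2
  have hdisjT : Disjoint ({ω | s1 ω = true ∧ q ≤ Y1 ω} ∩ {ω | s0 ω = true})
      ({ω | s1 ω = true ∧ q ≤ Y1 ω} \ {ω | s0 ω = true}) :=
    Set.disjoint_left.mpr fun ω h1 h2 => h2.2 h1.2
  have hsplitB : ∫ ω in {ω | s0 ω = true}, Y1 ω ∂P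
      = (∫ ω in {ω | s0 ω = true} ∩ {ω | s1 ω = true ∧ q ≤ Y1 ω}, Y1 ω ∂P)
        + ∫ ω in {ω | s0 ω = true} \ {ω | s1 ω = true ∧ q ≤ Y1 ω}, Y1 ω ∂P := by
    rw [← setIntegral_union hdisjB (hBm.diff hTm) hY1i.integrableOn hY1i.integrableOn,
        Set.inter_union_diff]
  have hsplitT : ∫ ω in {ω | s1 ω = true ∧ q ≤ Y1 ω}, Y1 ω ∂P
      = (∫ ω in {ω | s1 ω = true ∧ q ≤ Y1 ω} ∩ {ω | s0 ω = true}, Y1 ω ∂P)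
        + ∫ ω in {ω | s1 ω = true ∧ q ≤ Y1 ω} \ {ω | s0 ω = true}, Y1 ω ∂P := by
    rw [← setIntegral_union hdisjT (hTm.diff hBm) hY1i.integrableOn hY1i.integrableOn,
        Set.inter_union_diff]
  have hcomm : ∫ ω in {ω | s1 ω = true ∧ q ≤ Y1 ω} ∩ {ω | s0 ω = true}, Y1 ω ∂P
      = ∫ ω in {ω | s0 ω = true} ∩ {ω | s1 ω = true ∧ q ≤ Y1 ω}, Y1 ω ∂P := by
    rw [Set.inter_comm]
  have hub : ∫ ω in {ω | s0 ω = true} \ {ω | s1 ω = true ∧ q ≤ Y1 ω}, Y1 ω ∂P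
      ≤ q * (P ({ω | s0 ω = true} \ {ω | s1 ω = true ∧ q ≤ Y1 ω})).toReal := by
    have hae : ∀ᵐ ω ∂P,
        ω ∈ {ω | s0 ω = true} \ {ω | s1 ω = true ∧ q ≤ Y1 ω} → Y1 ω ≤ q := by
      refine hmono.mono fun ω h hω => ?_
      have h1 : s1 ω = true := h hω.1
      have h2 : ¬ q ≤ Y1 ω := fun hq' => hω.2 ⟨h1, hq'⟩
      linarith [lt_of_not_ge h2]
    have hmono' := setIntegral_mono_ae_restrict hY1i.integrableOn
      ((integrable_const q).integrableOn)
      ((ae_restrict_iff' (hBm.diff hTm)).2 hae)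
    calc ∫ ω in {ω | s0 ω = true} \ {ω | s1 ω = true ∧ q ≤ Y1 ω}, Y1 ω ∂P
        ≤ ∫ _ in {ω | s0 ω = true} \ {ω | s1 ω = true ∧ q ≤ Y1 ω}, q ∂P := hmono'
      _ = q * (P ({ω | s0 ω = true} \ {ω | s1 ω = true ∧ q ≤ Y1 ω})).toReal := by
          rw [setIntegral_const, smul_eq_mul, mul_comm, measureReal_def]
  have hlb : q * (P ({ω | s1 ω = true ∧ q ≤ Y1 ω} \ {ω | s0 ω = true})).toReal
      ≤ ∫ ω in {ω | s1 ω = true ∧ q ≤ Y1 ω} \ {ω | s0 ω = true}, Y1 ω ∂P := by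
    have hmono' := setIntegral_mono_on ((integrable_const q).integrableOn)
      hY1i.integrableOn (hTm.diff hBm) (fun ω hω => hω.1.2)
    calc q * (P ({ω | s1 ω = true ∧ q ≤ Y1 ω} \ {ω | s0 ω = true})).toReal
        = ∫ _ in {ω | s1 ω = true ∧ q ≤ Y1 ω} \ {ω | s0 ω = true}, q ∂P := by
          rw [setIntegral_const, smul_eq_mul, mul_comm, measureReal_def]
      _ ≤ _ := hmono'
  have hBdiff : (P ({ω | s0 ω = true} \ {ω | s1 ω = true ∧ q ≤ Y1 ω})).toReal
      = (P {ω | s0 ω = true}).toReal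
        - (P ({ω | s0 ω = true} ∩ {ω | s1 ω = true ∧ q ≤ Y1 ω})).toReal := by
    rw [show {ω | s0 ω = true} \ {ω | s1 ω = true ∧ q ≤ Y1 ω}
          = {ω | s0 ω = true} \ ({ω | s0 ω = true} ∩ {ω | s1 ω = true ∧ q ≤ Y1 ω})
        from (Set.diff_self_inter).symm,
      measure_diff Set.inter_subset_left (hBm.inter hTm).nullMeasurableSet (hPfin _),
      ENNReal.toReal_sub_of_le (measure_mono Set.inter_subset_left) (hPfin _)]
  have hTdiff : (P ({ω | s1 ω = true ∧ q ≤ Y1 ω} \ {ω | s0 ω = true})).toReal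
      = (P {ω | s1 ω = true ∧ q ≤ Y1 ω}).toReal
        - (P ({ω | s0 ω = true} ∩ {ω | s1 ω = true ∧ q ≤ Y1 ω})).toReal := by
    rw [show {ω | s1 ω = true ∧ q ≤ Y1 ω} \ {ω | s0 ω = true}
          = {ω | s1 ω = true ∧ q ≤ Y1 ω}
            \ ({ω | s1 ω = true ∧ q ≤ Y1 ω} ∩ {ω | s0 ω = true})
        from (Set.diff_self_inter).symm,
      measure_diff Set.inter_subset_left (hTm.inter hBm).nullMeasurableSet (hPfin _),
      ENNReal.toReal_sub_of_le (measure_mono Set.inter_subset_left) (hPfin _),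
      Set.inter_comm]
  have htrim : ∫ ω in {ω | s0 ω = true}, Y1 ω ∂P
      ≤ ∫ ω in {ω | s1 ω = true ∧ q ≤ Y1 ω}, Y1 ω ∂P := by
    have heq : (P ({ω | s0 ω = true} \ {ω | s1 ω = true ∧ q ≤ Y1 ω})).toReal
        = (P ({ω | s1 ω = true ∧ q ≤ Y1 ω} \ {ω | s0 ω = true})).toReal := by
      rw [hBdiff, hTdiff, hmT]
    rw [heq] at hub
    linarith
  -- condMean computations
  have cm1 : condMean P {ω | s1 ω = true ∧ s0 ω = true} (fun ω => Y1 ω - Y0 ω)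
      = ((∫ ω in {ω | s0 ω = true}, Y1 ω ∂P) - ∫ ω in {ω | s0 ω = true}, Y0 ω ∂P)
        / (P {ω | s0 ω = true}).toReal := by
    unfold condMean
    rw [setIntegral_congr_set hAae, hPA,
      integral_sub hY1i.integrableOn hY0i.integrableOn]
  have hfacT : ∫ ω in {ω | d ω = true} ∩ {ω | s1 ω = true ∧ q ≤ Y1 ω}, Y1 ω ∂P
      = (P {ω | d ω = true}).toReal
        * ∫ ω in {ω | s1 ω = true ∧ q ≤ Y1 ω}, Y1 ω ∂P := by
    have h := factor_integral P d hdm _ hZm hindep true _ hETm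
      (fun p => p.1) measurable_fst
    rw [hpreT] at h
    exact h
  have hfacB : ∫ ω in {ω | d ω = false} ∩ {ω | s0 ω = true}, Y0 ω ∂P
      = (P {ω | d ω = false}).toReal * ∫ ω in {ω | s0 ω = true}, Y0 ω ∂P := by
    have h := factor_integral P d hdm _ hZm hindep false _ hEBm
      (fun p => p.2.1) (measurable_fst.comp measurable_snd)
    rw [hpreB] at h
    exact h
  have hmeasT : P ({ω | d ω = true} ∩ {ω | s1 ω = true ∧ q ≤ Y1 ω})
      = P {ω | d ω = true} * P {ω | s1 ω = true ∧ q ≤ Y1 ω} := by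
    have h := factor_measure P d _ hindep true _ hETm
    rwa [hpreT] at h
  have hmeasB : P ({ω | d ω = false} ∩ {ω | s0 ω = true})
      = P {ω | d ω = false} * P {ω | s0 ω = true} := by
    have h := factor_measure P d _ hindep false _ hEBm
    rwa [hpreB] at h
  have cm2 : condMean P {ω | d ω = true ∧ (if d ω = true then s1 ω else s0 ω) = true
        ∧ q ≤ (if d ω = true then Y1 ω else Y0 ω)}
        (fun ω => if d ω = true then Y1 ω else Y0 ω)
      = (∫ ω in {ω | s1 ω = true ∧ q ≤ Y1 ω}, Y1 ω ∂P)
        / (P {ω | s0 ω = true}).toReal := by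
    unfold condMean
    rw [eT, hpreT]
    have hnum : ∫ ω in {ω | d ω = true} ∩ {ω | s1 ω = true ∧ q ≤ Y1 ω},
        (fun ω => if d ω = true then Y1 ω else Y0 ω) ω ∂P
        = ∫ ω in {ω | d ω = true} ∩ {ω | s1 ω = true ∧ q ≤ Y1 ω}, Y1 ω ∂P :=
      setIntegral_congr_fun (hDtm.inter hTm) (fun ω hω => if_pos hω.1)
    rw [hnum, hfacT, hmeasT, ENNReal.toReal_mul,
      mul_div_mul_left _ _ (ne_of_gt hd1pos), hmT]
  have cm3 : condMean P {ω | d ω = false ∧ (if d ω = true then s1 ω else s0 ω) = true}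
        (fun ω => if d ω = true then Y1 ω else Y0 ω)
      = (∫ ω in {ω | s0 ω = true}, Y0 ω ∂P) / (P {ω | s0 ω = true}).toReal := by
    unfold condMean
    rw [eDf, hpreB]
    have hnum : ∫ ω in {ω | d ω = false} ∩ {ω | s0 ω = true},
        (fun ω => if d ω = true then Y1 ω else Y0 ω) ω ∂P
        = ∫ ω in {ω | d ω = false} ∩ {ω | s0 ω = true}, Y0 ω ∂P :=
      setIntegral_congr_fun (hDfm.inter hBm)
        (fun ω hω => if_neg (by simp [show d ω = false from hω.1]))
    rw [hnum, hfacB, hmeasB, ENNReal.toReal_mul,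
      mul_div_mul_left _ _ (ne_of_gt hd0pos)]
  beta_reduce
  rw [cm1, cm2, cm3, div_sub_div_same]
  gcongr
end

section
/- In the sample selection setup with strong monotonicity, let q ∈ ℝ satisfy P(Y ≤ q | D=1, S=1) = p₀ and P(Y = q | D=1, S=1) = 0. Then the always-taker average treatment effect satisfies E[Y₁ − Y₀ | S₁ = 1, S₀ = 1] ≥ E[Y | D=1, S=1, Y ≤ q] − E[Y | D=0, S=1]. -/
open MeasureTheory ProbabilityTheory

/-- Factorization of a set integral over an independent splitting. -/
lemma indep_setIntegral {Ω β : Type*} [MeasurableSpace Ω] [MeasurableSpace β]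
    (P : Measure Ω) [IsProbabilityMeasure P]
    {d : Ω → Bool} {W : Ω → β} (hdm : Measurable d) (hWm : Measurable W)
    (hindep : ProbabilityTheory.IndepFun d W P) (b : Bool) {B : Set β}
    (hB : MeasurableSet B) (f : β → ℝ) (hfm : Measurable f)
    (hi : Integrable (fun ω => f (W ω)) P) :
    ∫ ω in d ⁻¹' {b} ∩ W ⁻¹' B, f (W ω) ∂P
      = (P (d ⁻¹' {b})).toReal * ∫ ω in W ⁻¹' B, f (W ω) ∂P := by
  set X : Ω → ℝ := fun ω => Set.indicator ({b} : Set Bool) (fun _ => (1:ℝ)) (d ω) with hX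
  set Z : Ω → ℝ := fun ω => Set.indicator B f (W ω) with hZ
  have hXZ : ProbabilityTheory.IndepFun X Z P :=
    hindep.comp (measurable_const.indicator (measurableSet_singleton b))
      (hfm.indicator hB)
  have hXeq : X = (d ⁻¹' {b}).indicator (fun _ => (1:ℝ)) := rfl
  have hZeq : Z = (W ⁻¹' B).indicator (fun ω => f (W ω)) := rfl
  have hXi : Integrable X P := by
    rw [hXeq]
    exact (integrable_const (1:ℝ)).indicator (hdm (measurableSet_singleton b))
  have hZi : Integrable Z P := by
    rw [hZeq]
    exact hi.indicator (hWm hB)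
  have hmul := hXZ.integral_fun_mul_eq_mul_integral hXi.aestronglyMeasurable hZi.aestronglyMeasurable
  have hprod : (fun ω => X ω * Z ω)
      = (d ⁻¹' {b} ∩ W ⁻¹' B).indicator (fun ω => f (W ω)) := by
    funext ω
    simp only [hX, hZ, Set.indicator_apply, Set.mem_inter_iff, Set.mem_preimage,
      Set.mem_singleton_iff]
    by_cases h1 : d ω = b <;> by_cases h2 : W ω ∈ B <;> simp [h1, h2]
  have hIX : ∫ ω, X ω ∂P = (P (d ⁻¹' {b})).toReal := by
    rw [hXeq, integral_indicator_const (1:ℝ) (hdm (measurableSet_singleton b))]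
    simp [measureReal_def]
  have hIZ : ∫ ω, Z ω ∂P = ∫ ω in W ⁻¹' B, f (W ω) ∂P := by
    rw [hZeq, integral_indicator (hWm hB)]
  calc ∫ ω in d ⁻¹' {b} ∩ W ⁻¹' B, f (W ω) ∂P
      = ∫ ω, (d ⁻¹' {b} ∩ W ⁻¹' B).indicator (fun ω => f (W ω)) ω ∂P := by
        rw [integral_indicator ((hdm (measurableSet_singleton b)).inter (hWm hB))]
    _ = ∫ ω, X ω * Z ω ∂P := by rw [hprod]
    _ = (∫ ω, X ω ∂P) * ∫ ω, Z ω ∂P := hmul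
    _ = (P (d ⁻¹' {b})).toReal * ∫ ω in W ⁻¹' B, f (W ω) ∂P := by rw [hIX, hIZ]

/-- Trimming inequality: the integral over the lower part is at most the integral
over any other set of the same measure. -/
lemma trim_le {Ω : Type*} [MeasurableSpace Ω] (P : Measure Ω) [IsFiniteMeasure P]
    {E B : Set Ω} (hE : MeasurableSet E) (hB : MeasurableSet B)
    {f : Ω → ℝ} (hf : Integrable f P) {q : ℝ}
    (hEq : ∀ ω ∈ E, f ω ≤ q) (hBq : ∀ ω ∈ B \ E, q ≤ f ω)
    (hm : P E = P B) :
    ∫ ω in E, f ω ∂P ≤ ∫ ω in B, f ω ∂P := by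
  have hmeq : P (E \ B) = P (B \ E) := by
    have h1 : P (E ∩ B) + P (E \ B) = P E := measure_inter_add_diff E hB
    have h2 : P (B ∩ E) + P (B \ E) = P B := measure_inter_add_diff B hE
    rw [Set.inter_comm B E] at h2
    have : P (E ∩ B) + P (E \ B) = P (E ∩ B) + P (B \ E) := by rw [h1, h2, hm]
    exact (ENNReal.add_right_inj (measure_ne_top P _)).1 this
  have hdisj1 : Disjoint (E ∩ B) (E \ B) :=
    (disjoint_sdiff_self_right).mono_left Set.inter_subset_right
  have hdisj2 : Disjoint (B ∩ E) (B \ E) :=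
    (disjoint_sdiff_self_right).mono_left Set.inter_subset_right
  have hsplitE : ∫ ω in E, f ω ∂P
      = ∫ ω in E ∩ B, f ω ∂P + ∫ ω in E \ B, f ω ∂P := by
    rw [← setIntegral_union hdisj1 (hE.diff hB) hf.integrableOn hf.integrableOn,
      Set.inter_union_diff]
  have hsplitB : ∫ ω in B, f ω ∂P
      = ∫ ω in B ∩ E, f ω ∂P + ∫ ω in B \ E, f ω ∂P := by
    rw [← setIntegral_union hdisj2 (hB.diff hE) hf.integrableOn hf.integrableOn,
      Set.inter_union_diff]
  have hub : ∫ ω in E \ B, f ω ∂P ≤ q * (P (E \ B)).toReal := by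
    calc ∫ ω in E \ B, f ω ∂P ≤ ∫ _ω in E \ B, q ∂P :=
          setIntegral_mono_on hf.integrableOn (integrable_const q).integrableOn
            (hE.diff hB) (fun ω hω => hEq ω hω.1)
      _ = (P (E \ B)).toReal * q := by rw [setIntegral_const, smul_eq_mul, measureReal_def]
      _ = q * (P (E \ B)).toReal := by ring
  have hlb : q * (P (B \ E)).toReal ≤ ∫ ω in B \ E, f ω ∂P := by
    calc q * (P (B \ E)).toReal = (P (B \ E)).toReal * q := by ring
      _ = ∫ _ω in B \ E, q ∂P := by rw [setIntegral_const, smul_eq_mul, measureReal_def]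
      _ ≤ ∫ ω in B \ E, f ω ∂P :=
          setIntegral_mono_on (integrable_const q).integrableOn hf.integrableOn
            (hB.diff hE) (fun ω hω => hBq ω hω)
  have hinter : ∫ ω in E ∩ B, f ω ∂P = ∫ ω in B ∩ E, f ω ∂P := by
    rw [Set.inter_comm]
  have hreal : q * (P (E \ B)).toReal = q * (P (B \ E)).toReal := by rw [hmeq]
  linarith [hub, hlb, hsplitE, hsplitB]

/-- Lower Lee bound under strong monotonicity: if `q` is the `p₀`-quantile of the
observed outcome distribution of the selected treated (with no atom at `q`), then the
always-taker average treatment effect is at least the mean of the selected treated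
outcomes trimmed from above at `q`, minus the mean outcome of the selected controls. -/
theorem lee_lower_bound {Ω : Type*} [MeasurableSpace Ω] (P : Measure Ω)
    [IsProbabilityMeasure P]
    (Y1 Y0 : Ω → ℝ) (s1 s0 d : Ω → Bool)
    (hY1m : Measurable Y1) (hY0m : Measurable Y0)
    (hs1m : Measurable s1) (hs0m : Measurable s0) (hdm : Measurable d)
    (hY1i : Integrable Y1 P) (hY0i : Integrable Y0 P)
    (hindep : IndepFun d (fun ω => (Y1 ω, Y0 ω, s1 ω, s0 ω)) P)
    (hD0 : 0 < P {ω | d ω = true}) (hD1 : P {ω | d ω = true} < 1)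
    (hS1 : 0 < P {ω | s1 ω = true}) (hS0 : 0 < P {ω | s0 ω = true})
    (hmono : ∀ᵐ ω ∂P, s0 ω = true → s1 ω = true)
    (p0 : ℝ) (hp0 : p0 = (P {ω | s0 ω = true}).toReal / (P {ω | s1 ω = true}).toReal)
    (S : Ω → Bool) (hS : S = fun ω => if d ω then s1 ω else s0 ω)
    (Y : Ω → ℝ) (hY : Y = fun ω => if d ω then Y1 ω else Y0 ω)
    (q : ℝ)
    (hq1 : (P {ω | d ω = true ∧ S ω = true ∧ Y ω ≤ q}).toReal
        / (P {ω | d ω = true ∧ S ω = true}).toReal = p0)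
    (hq2 : P {ω | d ω = true ∧ S ω = true ∧ Y ω = q} = 0) :
    condMean P {ω | d ω = true ∧ S ω = true ∧ Y ω ≤ q} Y
        - condMean P {ω | d ω = false ∧ S ω = true} Y
      ≤ condMean P {ω | s1 ω = true ∧ s0 ω = true} (fun ω => Y1 ω - Y0 ω) := by
  classical
  have hWm : Measurable (fun ω => (Y1 ω, Y0 ω, s1 ω, s0 ω)) :=
    hY1m.prodMk (hY0m.prodMk (hs1m.prodMk hs0m))
  have hm221 : Measurable fun p : ℝ × ℝ × Bool × Bool => p.2.2.1 :=
    measurable_fst.comp (measurable_snd.comp measurable_snd)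
  have hm222 : Measurable fun p : ℝ × ℝ × Bool × Bool => p.2.2.2 :=
    measurable_snd.comp (measurable_snd.comp measurable_snd)
  have hB1 : MeasurableSet {p : ℝ × ℝ × Bool × Bool | p.2.2.1 = true ∧ p.1 ≤ q} :=
    (hm221 (measurableSet_singleton true)).inter
      (measurableSet_le measurable_fst measurable_const)
  have hBG : MeasurableSet {p : ℝ × ℝ × Bool × Bool | p.2.2.1 = true} :=
    hm221 (measurableSet_singleton true)
  have hBF : MeasurableSet {p : ℝ × ℝ × Bool × Bool | p.2.2.2 = true} :=
    hm222 (measurableSet_singleton true)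
  have hEmeas : MeasurableSet {ω | s1 ω = true ∧ Y1 ω ≤ q} :=
    (hs1m (measurableSet_singleton true)).inter (measurableSet_le hY1m measurable_const)
  have hAmeas : MeasurableSet {ω | s1 ω = true ∧ s0 ω = true} :=
    (hs1m (measurableSet_singleton true)).inter (hs0m (measurableSet_singleton true))
  have hFmeas : MeasurableSet {ω | s0 ω = true} := hs0m (measurableSet_singleton true)
  have hTmeas : MeasurableSet (d ⁻¹' {true}) := hdm (measurableSet_singleton true)
  have hT'meas : MeasurableSet (d ⁻¹' {false}) := hdm (measurableSet_singleton false)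
  -- set identities
  have hset1 : {ω | d ω = true ∧ (if d ω then s1 ω else s0 ω) = true
        ∧ (if d ω then Y1 ω else Y0 ω) ≤ q}
      = d ⁻¹' {true} ∩ {ω | s1 ω = true ∧ Y1 ω ≤ q} := by
    ext ω; by_cases h : d ω = true <;> simp [h]
  have hset2 : {ω | d ω = true ∧ (if d ω then s1 ω else s0 ω) = true}
      = d ⁻¹' {true} ∩ {ω | s1 ω = true} := by
    ext ω; by_cases h : d ω = true <;> simp [h]
  have hset3 : {ω | d ω = false ∧ (if d ω then s1 ω else s0 ω) = true}
      = d ⁻¹' {false} ∩ {ω | s0 ω = true} := by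
    ext ω; by_cases h : d ω = true <;> simp [h]
  -- independence: probabilities factorize
  have hPE : P (d ⁻¹' {true} ∩ {ω | s1 ω = true ∧ Y1 ω ≤ q})
      = P (d ⁻¹' {true}) * P {ω | s1 ω = true ∧ Y1 ω ≤ q} :=
    hindep.measure_inter_preimage_eq_mul _ _ (measurableSet_singleton true) hB1
  have hPG : P (d ⁻¹' {true} ∩ {ω | s1 ω = true})
      = P (d ⁻¹' {true}) * P {ω | s1 ω = true} :=
    hindep.measure_inter_preimage_eq_mul _ _ (measurableSet_singleton true) hBG
  have hPF : P (d ⁻¹' {false} ∩ {ω | s0 ω = true})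
      = P (d ⁻¹' {false}) * P {ω | s0 ω = true} :=
    hindep.measure_inter_preimage_eq_mul _ _ (measurableSet_singleton false) hBF
  -- independence: integrals factorize
  have hIE : ∫ ω in d ⁻¹' {true} ∩ {ω | s1 ω = true ∧ Y1 ω ≤ q}, Y1 ω ∂P
      = (P (d ⁻¹' {true})).toReal * ∫ ω in {ω | s1 ω = true ∧ Y1 ω ≤ q}, Y1 ω ∂P :=
    indep_setIntegral P hdm hWm hindep true hB1 (fun p => p.1) measurable_fst hY1i
  have hIF : ∫ ω in d ⁻¹' {false} ∩ {ω | s0 ω = true}, Y0 ω ∂P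
      = (P (d ⁻¹' {false})).toReal * ∫ ω in {ω | s0 ω = true}, Y0 ω ∂P :=
    indep_setIntegral P hdm hWm hindep false hBF (fun p => p.2.1)
      (measurable_fst.comp measurable_snd) hY0i
  -- positivity facts
  have hc1 : (P (d ⁻¹' {true})).toReal ≠ 0 :=
    ENNReal.toReal_ne_zero.2 ⟨ne_of_gt hD0, measure_ne_top P _⟩
  have hfc : d ⁻¹' {false} = {ω | d ω = true}ᶜ := by
    ext ω; simp [Bool.not_eq_true]
  have hD0' : 0 < P (d ⁻¹' {false}) := by
    rw [hfc, measure_compl (show MeasurableSet {ω | d ω = true} from hdm (measurableSet_singleton true)) (measure_ne_top P _)]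
    simpa [measure_univ] using tsub_pos_iff_lt.2 hD1
  have hc0 : (P (d ⁻¹' {false})).toReal ≠ 0 :=
    ENNReal.toReal_ne_zero.2 ⟨ne_of_gt hD0', measure_ne_top P _⟩
  have hGne : (P {ω | s1 ω = true}).toReal ≠ 0 :=
    ENNReal.toReal_ne_zero.2 ⟨ne_of_gt hS1, measure_ne_top P _⟩
  -- F and A agree a.e.
  have hFA : ({ω | s0 ω = true} : Set Ω) =ᵐ[P] ({ω | s1 ω = true ∧ s0 ω = true} : Set Ω) := by
    rw [Filter.eventuallyEq_set]
    filter_upwards [hmono] with ω h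
    exact ⟨fun h0 => ⟨h h0, h0⟩, fun h01 => h01.2⟩
  have hPFA : P {ω | s0 ω = true} = P {ω | s1 ω = true ∧ s0 ω = true} := measure_congr hFA
  have hIFA : ∫ ω in {ω | s0 ω = true}, Y0 ω ∂P
      = ∫ ω in {ω | s1 ω = true ∧ s0 ω = true}, Y0 ω ∂P := setIntegral_congr_set hFA
  -- the measure of the trimmed set equals the measure of the always-taker set
  have hq1' := hq1
  simp only [hS, hY] at hq1'
  rw [hset1, hset2, hPE, hPG, ENNReal.toReal_mul, ENNReal.toReal_mul,
    mul_div_mul_left _ _ hc1, hp0] at hq1'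
  have hEPF : (P {ω | s1 ω = true ∧ Y1 ω ≤ q}).toReal = (P {ω | s0 ω = true}).toReal := by
    field_simp at hq1'
    linarith
  have hPEA : P {ω | s1 ω = true ∧ Y1 ω ≤ q} = P {ω | s1 ω = true ∧ s0 ω = true} := by
    refine (ENNReal.toReal_eq_toReal_iff' (measure_ne_top P _) (measure_ne_top P _)).1 ?_
    rw [hEPF, hPFA]
  -- the trimming inequality
  have hkey : ∫ ω in {ω | s1 ω = true ∧ Y1 ω ≤ q}, Y1 ω ∂P
      ≤ ∫ ω in {ω | s1 ω = true ∧ s0 ω = true}, Y1 ω ∂P := by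
    refine trim_le P hEmeas hAmeas hY1i (fun ω hω => hω.2) (fun ω hω => ?_) hPEA
    by_contra hlt
    push_neg at hlt
    exact hω.2 ⟨hω.1.1, le_of_lt hlt⟩
  -- positivity of the always-taker measure
  have hmpos : 0 < (P {ω | s1 ω = true ∧ s0 ω = true}).toReal :=
    ENNReal.toReal_pos (by rw [← hPFA]; exact ne_of_gt hS0) (measure_ne_top P _)
  -- compute the three conditional means
  have hcond1 : condMean P (d ⁻¹' {true} ∩ {ω | s1 ω = true ∧ Y1 ω ≤ q})
        (fun ω => if d ω then Y1 ω else Y0 ω)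
      = condMean P {ω | s1 ω = true ∧ Y1 ω ≤ q} Y1 := by
    unfold condMean
    have heq : Set.EqOn (fun ω => if d ω then Y1 ω else Y0 ω) Y1
        (d ⁻¹' {true} ∩ {ω | s1 ω = true ∧ Y1 ω ≤ q}) := by
      intro ω hω
      have hd : d ω = true := hω.1
      simp [hd]
    rw [setIntegral_congr_fun (hTmeas.inter hEmeas) heq, hIE, hPE, ENNReal.toReal_mul,
      mul_div_mul_left _ _ hc1]
  have hcond0 : condMean P (d ⁻¹' {false} ∩ {ω | s0 ω = true})
        (fun ω => if d ω then Y1 ω else Y0 ω)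
      = condMean P {ω | s0 ω = true} Y0 := by
    unfold condMean
    have heq : Set.EqOn (fun ω => if d ω then Y1 ω else Y0 ω) Y0
        (d ⁻¹' {false} ∩ {ω | s0 ω = true}) := by
      intro ω hω
      have hd : d ω = false := hω.1
      simp [hd]
    rw [setIntegral_congr_fun (hT'meas.inter hFmeas) heq, hIF, hPF, ENNReal.toReal_mul,
      mul_div_mul_left _ _ hc0]
  -- assemble
  simp only [hS, hY]
  rw [hset1, hset3, hcond1, hcond0]
  unfold condMean
  rw [integral_sub hY1i.integrableOn hY0i.integrableOn]
  have hPEtoA : (P {ω | s1 ω = true ∧ Y1 ω ≤ q}).toReal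
      = (P {ω | s1 ω = true ∧ s0 ω = true}).toReal := by rw [hPEA]
  rw [hPEtoA, hIFA, hPFA, sub_div]
  exact sub_le_sub_right (div_le_div_of_nonneg_right hkey hmpos.le) _
end

section
/- In the sample selection setup with strong monotonicity, E[Y | D = 0, S = 1] = E[Y₀ | S₁ = 1, S₀ = 1]. That is, the observed mean outcome of the selected control units identifies the mean control potential outcome of the always-takers. -/
open MeasureTheory ProbabilityTheory

/-- Under strong monotonicity, the observed mean outcome of the selected control units
identifies the mean control potential outcome of the always-takers:
`E[Y | D = 0, S = 1] = E[Y₀ | S₁ = 1, S₀ = 1]`. -/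
theorem selected_controls_identify_always_takers {Ω : Type*} [MeasurableSpace Ω]
    (P : Measure Ω) [IsProbabilityMeasure P]
    (Y1 Y0 : Ω → ℝ) (s1 s0 d : Ω → Bool)
    (hY1m : Measurable Y1) (hY0m : Measurable Y0)
    (hs1m : Measurable s1) (hs0m : Measurable s0) (hdm : Measurable d)
    (hY1i : Integrable Y1 P) (hY0i : Integrable Y0 P)
    (hindep : IndepFun d (fun ω => (Y1 ω, Y0 ω, s1 ω, s0 ω)) P)
    (hD0 : 0 < P {ω | d ω = true}) (hD1 : P {ω | d ω = true} < 1)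
    (hS1 : 0 < P {ω | s1 ω = true}) (hS0 : 0 < P {ω | s0 ω = true})
    (hmono : ∀ᵐ ω ∂P, s0 ω = true → s1 ω = true)
    (S : Ω → Bool) (hS : S = fun ω => if d ω then s1 ω else s0 ω)
    (Y : Ω → ℝ) (hY : Y = fun ω => if d ω then Y1 ω else Y0 ω) :
    condMean P {ω | d ω = false ∧ S ω = true} Y
      = condMean P {ω | s1 ω = true ∧ s0 ω = true} Y0 := by
  classical
  set vec : Ω → ℝ × ℝ × Bool × Bool := fun ω => (Y1 ω, Y0 ω, s1 ω, s0 ω) with hvec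
  -- measurable sets
  have hdf : MeasurableSet {ω | d ω = false} := hdm (by trivial : MeasurableSet {false})
  have hs0t : MeasurableSet {ω | s0 ω = true} := hs0m (by trivial : MeasurableSet {true})
  have hs1t : MeasurableSet {ω | s1 ω = true} := hs1m (by trivial : MeasurableSet {true})
  set A' : Set Ω := {ω | d ω = false ∧ s0 ω = true} with hA'
  have hA'm : MeasurableSet A' := hdf.inter hs0t
  -- the selected-control set is A'
  have hAA' : {ω | d ω = false ∧ S ω = true} = A' := by
    ext ω
    simp only [hS, hA', Set.mem_setOf_eq]
    cases h : d ω <;> simp [h]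
  -- on A', Y = Y0
  have hYA' : ∫ ω in A', Y ω ∂P = ∫ ω in A', Y0 ω ∂P := by
    refine setIntegral_congr_fun hA'm (fun ω hω => ?_)
    simp only [hY]
    rw [hω.1]
    simp
  -- independence of the two real-valued functionals
  set φ : Bool → ℝ := fun b => if b = false then 1 else 0 with hφ
  set ψ : ℝ × ℝ × Bool × Bool → ℝ := fun p => if p.2.2.2 = true then p.2.1 else 0 with hψ
  have hφm : Measurable φ := measurable_from_top
  have hψm : Measurable ψ := by
    apply Measurable.ite
    · exact (measurable_snd.snd.snd) (by trivial : MeasurableSet {true})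
    · exact measurable_snd.fst
    · exact measurable_const
  have hfg : IndepFun (φ ∘ d) (ψ ∘ vec) P := hindep.comp hφm hψm
  have hfω : ∀ ω, (φ ∘ d) ω = Set.indicator {ω | d ω = false} (fun _ => (1:ℝ)) ω := by
    intro ω
    by_cases h : d ω = false <;> simp [φ, Set.indicator_apply, h]
  have hgω : ∀ ω, (ψ ∘ vec) ω = Set.indicator {ω | s0 ω = true} Y0 ω := by
    intro ω
    by_cases h : s0 ω = true <;> simp [ψ, vec, Set.indicator_apply, h]
  have hfm : AEStronglyMeasurable (φ ∘ d) P := (hφm.comp hdm).aestronglyMeasurable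
  have hvecm : Measurable vec :=
    hY1m.prodMk (hY0m.prodMk (hs1m.prodMk hs0m))
  have hgm : AEStronglyMeasurable (ψ ∘ vec) P := (hψm.comp hvecm).aestronglyMeasurable
  -- factorize the numerator
  have hmul : ∫ ω, ((φ ∘ d) * (ψ ∘ vec)) ω ∂P
      = (∫ ω, (φ ∘ d) ω ∂P) * ∫ ω, (ψ ∘ vec) ω ∂P := hfg.integral_mul_eq_mul_integral hfm hgm
  have hfint : ∫ ω, (φ ∘ d) ω ∂P = (P {ω | d ω = false}).toReal := by
    rw [show (fun ω => (φ ∘ d) ω) = Set.indicator {ω | d ω = false} (fun _ => (1:ℝ)) from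
      funext hfω]
    rw [integral_indicator_const (1:ℝ) hdf]
    simp
    rfl
  have hgint : ∫ ω, (ψ ∘ vec) ω ∂P = ∫ ω in {ω | s0 ω = true}, Y0 ω ∂P := by
    rw [show (fun ω => (ψ ∘ vec) ω) = Set.indicator {ω | s0 ω = true} Y0 from funext hgω]
    exact integral_indicator hs0t
  have hprod : ∀ ω, ((φ ∘ d) * (ψ ∘ vec)) ω = Set.indicator A' Y0 ω := by
    intro ω
    by_cases h1 : d ω = false <;> by_cases h2 : s0 ω = true <;>
      simp [φ, ψ, vec, A', Set.indicator_apply, h1, h2]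
  have hnum : ∫ ω in A', Y0 ω ∂P
      = (P {ω | d ω = false}).toReal * ∫ ω in {ω | s0 ω = true}, Y0 ω ∂P := by
    rw [← integral_indicator hA'm, ← funext hprod, hmul, hfint, hgint]
  -- factorize the measure
  have hmeas : P A' = P {ω | d ω = false} * P {ω | s0 ω = true} := by
    have h := hindep.measure_inter_preimage_eq_mul {false}
      {p : ℝ × ℝ × Bool × Bool | p.2.2.2 = true}
      (by trivial) ((measurable_snd.snd.snd) (by trivial : MeasurableSet {true}))
    have e1 : d ⁻¹' {false} = {ω | d ω = false} := rfl
    have e2 : vec ⁻¹' {p : ℝ × ℝ × Bool × Bool | p.2.2.2 = true} = {ω | s0 ω = true} := rfl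
    rw [e1, e2] at h
    exact h
  -- positivity of P(d = false)
  have hdcompl : ({ω | d ω = false} : Set Ω) = {ω | d ω = true}ᶜ := by
    ext ω; simp [Set.mem_setOf_eq, Set.mem_compl_iff]
  have hPdpos : 0 < P {ω | d ω = false} := by
    have hms : MeasurableSet ({ω | d ω = true} : Set Ω) := hdm (by trivial : MeasurableSet {true})
    rw [hdcompl, measure_compl hms (measure_ne_top _ _)]
    simp only [measure_univ]
    exact tsub_pos_of_lt hD1
  have hPdne : (P {ω | d ω = false}).toReal ≠ 0 := by
    refine ne_of_gt (ENNReal.toReal_pos hPdpos.ne' (measure_ne_top _ _))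
  -- a.e. identification of always-takers with {s0 = 1}
  have hBC : ({ω | s1 ω = true ∧ s0 ω = true} : Set Ω) =ᵐ[P] {ω | s0 ω = true} := by
    rw [Filter.eventuallyEq_set]
    filter_upwards [hmono] with ω h
    exact ⟨fun hb => hb.2, fun hc => ⟨h hc, hc⟩⟩
  -- conclude
  unfold condMean
  rw [hAA', hYA', hnum, hmeas, setIntegral_congr_set hBC, measure_congr hBC,
    ENNReal.toReal_mul]
  exact mul_div_mul_left _ _ hPdne
end
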